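/- The system is strongly exponentially stable if and only if there exist constants B ≥ 1, b > 0 and c ≥ 0 with 2c < b such that Σ_{k=0}^m e^{b(m-k)} ‖(A_m^k)* x*‖ ≤ B e^{c m} ‖x*‖ for all m ∈ ℕ and x* ∈ X*. -/

import Mathlib

open scoped BigOperators

/-- The evolution operator `A_m^n = A(m) ∘ ⋯ ∘ A(n+1)`, with `A_n^n = 1`. -/
noncomputable def evol {X : Type*} [NormedAddCommGroup X] [NormedSpace ℝ X]
    (A : ℕ → X →L[ℝ] X) (m n : ℕ) : X →L[ℝ] X :=
  ((List.range (m - n)).map (fun k => A (n + k + 1))).foldl (fun P B => B ∘L P) 1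

theorem stmt16 {X : Type*} [NormedAddCommGroup X] [NormedSpace ℝ X] [CompleteSpace X]
    (A : ℕ → X →L[ℝ] X) :
    (∃ N α β : ℝ, 1 ≤ N ∧ 0 < α ∧ 0 ≤ β ∧ β < α ∧
      ∀ n m : ℕ, n ≤ m → ∀ x : X,
        ‖evol A m n x‖ ≤ N * Real.exp (-α * ((m : ℝ) - n)) * Real.exp (β * n) * ‖x‖) ↔
    (∃ B b c : ℝ, 1 ≤ B ∧ 0 < b ∧ 0 ≤ c ∧ 2 * c < b ∧
      ∀ m : ℕ, ∀ xs : X →L[ℝ] ℝ,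
        ∑ k ∈ Finset.range (m + 1),
          Real.exp (b * ((m : ℝ) - k)) * ‖xs.comp (evol A m k)‖
            ≤ B * Real.exp (c * m) * ‖xs‖) := by
  constructor
  · rintro ⟨N, α, β, hN, hα, hβ0, hβα, hest⟩
    have hεpos : (0:ℝ) < (α - β) / 4 := by linarith
    set ε := (α - β) / 4 with hε
    refine ⟨N * (1 + 1/ε), α + β, β + ε, ?_, by linarith, by linarith, by linarith, ?_⟩
    · have h1 : (0:ℝ) < 1/ε := by positivity
      nlinarith
    · intro m xs
      have hterm : ∀ k ∈ Finset.range (m+1),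
          Real.exp ((α+β) * ((m:ℝ) - k)) * ‖xs.comp (evol A m k)‖
            ≤ N * Real.exp (β * m) * ‖xs‖ := by
        intro k hk
        have hkm : k ≤ m := Nat.lt_succ_iff.mp (Finset.mem_range.mp hk)
        have h1 : ‖xs.comp (evol A m k)‖
            ≤ ‖xs‖ * (N * Real.exp (-α * ((m:ℝ) - k)) * Real.exp (β * k)) := by
          refine ContinuousLinearMap.opNorm_le_bound _ (by positivity) ?_
          intro x
          calc ‖(xs.comp (evol A m k)) x‖ = ‖xs (evol A m k x)‖ := rfl
            _ ≤ ‖xs‖ * ‖evol A m k x‖ := xs.le_opNorm _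
            _ ≤ ‖xs‖ * (N * Real.exp (-α * ((m:ℝ) - k)) * Real.exp (β * k) * ‖x‖) := by
                have := hest k m hkm x
                exact mul_le_mul_of_nonneg_left this (norm_nonneg _)
            _ = ‖xs‖ * (N * Real.exp (-α * ((m:ℝ) - k)) * Real.exp (β * k)) * ‖x‖ := by ring
        calc Real.exp ((α+β) * ((m:ℝ) - k)) * ‖xs.comp (evol A m k)‖
            ≤ Real.exp ((α+β) * ((m:ℝ) - k)) *
              (‖xs‖ * (N * Real.exp (-α * ((m:ℝ) - k)) * Real.exp (β * k))) := by
              exact mul_le_mul_of_nonneg_left h1 (Real.exp_nonneg _)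
          _ = N * (Real.exp ((α+β) * ((m:ℝ) - k)) * Real.exp (-α * ((m:ℝ) - k)) *
                Real.exp (β * k)) * ‖xs‖ := by ring
          _ = N * Real.exp (β * m) * ‖xs‖ := by
              rw [← Real.exp_add, ← Real.exp_add]
              ring_nf
      have hsum := Finset.sum_le_sum hterm
      rw [Finset.sum_const, Finset.card_range, nsmul_eq_mul] at hsum
      refine hsum.trans ?_
      have hm1 : ((m:ℝ) + 1) ≤ (1 + 1/ε) * Real.exp (ε * m) := by
        have h1 : ε * m + 1 ≤ Real.exp (ε * m) := Real.add_one_le_exp _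
        have h2 : (1:ℝ) ≤ Real.exp (ε * m) := Real.one_le_exp (by positivity)
        have h3 : (m:ℝ) ≤ Real.exp (ε * m) / ε := by
          rw [le_div_iff₀ hεpos]
          nlinarith
        calc ((m:ℝ) + 1) ≤ Real.exp (ε * m) / ε + Real.exp (ε * m) := by linarith
          _ = (1 + 1/ε) * Real.exp (ε * m) := by field_simp; ring
      have hexp : Real.exp (β * m) * Real.exp (ε * m) = Real.exp ((β + ε) * m) := by
        rw [← Real.exp_add]; ring_nf
      push_cast
      calc ((m:ℝ) + 1) * (N * Real.exp (β * m) * ‖xs‖)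
          ≤ ((1 + 1/ε) * Real.exp (ε * m)) * (N * Real.exp (β * m) * ‖xs‖) := by
            apply mul_le_mul_of_nonneg_right hm1
            positivity
        _ = N * (1 + 1/ε) * (Real.exp (β * m) * Real.exp (ε * m)) * ‖xs‖ := by ring
        _ = N * (1 + 1/ε) * Real.exp ((β + ε) * m) * ‖xs‖ := by rw [hexp]
  · rintro ⟨B, b, c, hB, hb, hc0, hcb, hsum⟩
    refine ⟨B, b - c, c, hB, by linarith, hc0, by linarith, ?_⟩
    intro n m hnm x
    have hB0 : (0:ℝ) ≤ B := by linarith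
    refine NormedSpace.norm_le_dual_bound ℝ _ (by positivity) ?_
    intro f
    have hmem : n ∈ Finset.range (m + 1) := Finset.mem_range.mpr (Nat.lt_succ_of_le hnm)
    have hsingle : Real.exp (b * ((m:ℝ) - n)) * ‖f.comp (evol A m n)‖
        ≤ B * Real.exp (c * m) * ‖f‖ := by
      refine le_trans (Finset.single_le_sum (f := fun k : ℕ =>
        Real.exp (b * ((m:ℝ) - (k:ℝ))) * ‖f.comp (evol A m k)‖) (fun k _ => by positivity) hmem)
        (hsum m f)
    have hcomp : ‖f.comp (evol A m n)‖
        ≤ B * Real.exp (c * m) * Real.exp (-(b * ((m:ℝ) - n))) * ‖f‖ := by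
      have hepos : (0:ℝ) < Real.exp (b * ((m:ℝ) - n)) := Real.exp_pos _
      rw [Real.exp_neg]
      calc ‖f.comp (evol A m n)‖
          = (Real.exp (b * ((m:ℝ) - n)))⁻¹ *
            (Real.exp (b * ((m:ℝ) - n)) * ‖f.comp (evol A m n)‖) := by
            field_simp
        _ ≤ (Real.exp (b * ((m:ℝ) - n)))⁻¹ * (B * Real.exp (c * m) * ‖f‖) := by
            exact mul_le_mul_of_nonneg_left hsingle (by positivity)
        _ = B * Real.exp (c * m) * (Real.exp (b * ((m:ℝ) - n)))⁻¹ * ‖f‖ := by ring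
    have hexpeq : Real.exp (c * m) * Real.exp (-(b * ((m:ℝ) - n)))
        = Real.exp (-(b - c) * ((m:ℝ) - n)) * Real.exp (c * n) := by
      rw [← Real.exp_add, ← Real.exp_add]; ring_nf
    calc ‖f (evol A m n x)‖ = ‖(f.comp (evol A m n)) x‖ := rfl
      _ ≤ ‖f.comp (evol A m n)‖ * ‖x‖ := (f.comp (evol A m n)).le_opNorm x
      _ ≤ (B * Real.exp (c * m) * Real.exp (-(b * ((m:ℝ) - n))) * ‖f‖) * ‖x‖ := by
          exact mul_le_mul_of_nonneg_right hcomp (norm_nonneg _)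
      _ = B * (Real.exp (c * m) * Real.exp (-(b * ((m:ℝ) - n)))) * ‖x‖ * ‖f‖ := by ring
      _ = B * Real.exp (-(b - c) * ((m:ℝ) - n)) * Real.exp (c * n) * ‖x‖ * ‖f‖ := by
          rw [hexpeq]; ring
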